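/- Let γ be a Livsic-type tensor whose coordinate matrices are all Hermitian: γ(w) = Σ_I e_I ⊗ (γ_I w), where I ranges over the subsets of {0,…,d} of cardinality k+1, e_I is the corresponding wedge of standard basis vectors, and each γ_I ∈ M_n(ℂ) is Hermitian. Suppose V ⊆ ℂ^{d+1} is a real ℂ-subspace of dimension d−k admitting a basis v_0,…,v_{d−k−1} of vectors with real coordinates such that the endomorphism γ(v_0,…,v_{d−k−1}) is a positive definite Hermitian matrix. Then the set X := {[μ] ∈ ℙ(ℂ^{d+1}) : μ ∈ Ď(γ)} is hyperbolic with respect to V: ℙ(V) ∩ X = ∅, and for every real ℂ-subspace U ⊇ V with dim U = d−k+1, every point of X ∩ ℙ(U) is a real point. (Proposition 3.9: a definite Hermitian Livsic-type determinantal representation implies hyperbolicity.) -/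

import Mathlib

/-!
STATEMENT 12 (Proposition 3.9). A definite Hermitian Livsic-type determinantal
representation implies hyperbolicity. Points of `ℙ(ℂ^{d+1})` are modelled by their nonzero
representative vectors and subsets by their cones; `σ` is coordinatewise conjugation, a
point `[μ]` is real iff `σ(μ)` is proportional to `μ`, a subspace `W` is real iff
`σ(W) ⊆ W` (`σ` being an involution).
-/

noncomputable section

open ExteriorAlgebra TensorProduct
open scoped ComplexOrder

/-- `ℂ^{d+1}`. -/
abbrev Ed (d : ℕ) : Type := Fin (d + 1) → ℂ

/-- Coordinatewise complex conjugation `σ`. -/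
def conjE {d : ℕ} (x : Ed d) : Ed d := fun i => (starRingEnd ℂ) (x i)

/-- The wedge product `v 0 ∧ v 1 ∧ ⋯` of a finite family of vectors. -/
def wedgeVecs {d m : ℕ} (v : Fin m → Ed d) : ExteriorAlgebra ℂ (Ed d) :=
  (List.ofFn fun j => ExteriorAlgebra.ι ℂ (v j)).prod

/-- `ω = e₀ ∧ e₁ ∧ ⋯ ∧ e_d`. -/
def omegaTop (d : ℕ) : ExteriorAlgebra ℂ (Ed d) :=
  wedgeVecs (fun i : Fin (d + 1) => (Pi.single i 1 : Ed d))

/-- `e_I = e_{i₁} ∧ ⋯ ∧ e_{i_r}` for `I = {i₁ < ⋯ < i_r}`. -/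
def eWedge {d : ℕ} (I : Finset (Fin (d + 1))) : ExteriorAlgebra ℂ (Ed d) :=
  ((I.sort (· ≤ ·)).map fun i => ExteriorAlgebra.ι ℂ (Pi.single i (1 : ℂ) : Ed d)).prod

/-- Exterior multiplication by `x` tensored with the identity of `ℂⁿ`. -/
def mulTensor {d : ℕ} (n : ℕ) (x : ExteriorAlgebra ℂ (Ed d)) :
    (ExteriorAlgebra ℂ (Ed d)) ⊗[ℂ] (Fin n → ℂ) →ₗ[ℂ]
      (ExteriorAlgebra ℂ (Ed d)) ⊗[ℂ] (Fin n → ℂ) :=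
  TensorProduct.map (LinearMap.mulLeft ℂ x) LinearMap.id

-- AUX
def wedgeList {d : ℕ} (L : List (Ed d)) : ExteriorAlgebra ℂ (Ed d) :=
  (L.map (ExteriorAlgebra.ι ℂ)).prod

lemma wedgeVecs_eq_wedgeList {d m : ℕ} (v : Fin m → Ed d) :
    wedgeVecs v = wedgeList (List.ofFn v) := by
  unfold wedgeVecs wedgeList
  rw [List.map_ofFn]
  rfl

lemma wedgeVecs_eq_iMulti {d m : ℕ} (v : Fin m → Ed d) :
    wedgeVecs v = ExteriorAlgebra.ιMulti ℂ m v :=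
  (ExteriorAlgebra.ιMulti_apply v).symm

lemma eWedge_eq_wedgeList {d : ℕ} (I : Finset (Fin (d + 1))) :
    eWedge I = wedgeList ((I.sort (· ≤ ·)).map fun i => (Pi.single i 1 : Ed d)) := by
  unfold eWedge wedgeList
  rw [List.map_map]
  rfl

lemma wedgeList_append {d : ℕ} (L₁ L₂ : List (Ed d)) :
    wedgeList (L₁ ++ L₂) = wedgeList L₁ * wedgeList L₂ := by
  unfold wedgeList; rw [List.map_append, List.prod_append]

lemma wedgeList_cons {d : ℕ} (a : Ed d) (L : List (Ed d)) :
    wedgeList (a :: L) = ExteriorAlgebra.ι ℂ a * wedgeList L := by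
  unfold wedgeList; rw [List.map_cons, List.prod_cons]

lemma iota_anticomm {d : ℕ} (x y : Ed d) :
    ExteriorAlgebra.ι ℂ x * ExteriorAlgebra.ι ℂ y = -(ExteriorAlgebra.ι ℂ y * ExteriorAlgebra.ι ℂ x) := by
  exact eq_neg_of_add_eq_zero_left (ExteriorAlgebra.ι_add_mul_swap x y)

lemma iota_mul_wedgeList {d : ℕ} (x : Ed d) (L : List (Ed d)) :
    ExteriorAlgebra.ι ℂ x * wedgeList L
      = ((-1 : ℂ)) ^ L.length • (wedgeList L * ExteriorAlgebra.ι ℂ x) := by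
  induction L with
  | nil => simp [wedgeList]
  | cons a L ih =>
      rw [wedgeList_cons, ← mul_assoc, iota_anticomm, neg_mul, mul_assoc, ih,
        List.length_cons, pow_succ]
      rw [mul_smul_comm, ← mul_assoc]
      rw [← neg_smul]
      ring_nf

lemma mulTensor_tmul {d : ℕ} (n : ℕ) (x a : ExteriorAlgebra ℂ (Ed d)) (b : Fin n → ℂ) :
    mulTensor n x (a ⊗ₜ[ℂ] b) = (x * a) ⊗ₜ[ℂ] b := by
  simp [mulTensor]

lemma mulTensor_mul {d : ℕ} (n : ℕ) (x y : ExteriorAlgebra ℂ (Ed d))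
    (t : (ExteriorAlgebra ℂ (Ed d)) ⊗[ℂ] (Fin n → ℂ)) :
    mulTensor n (x * y) t = mulTensor n x (mulTensor n y t) := by
  induction t with
  | zero => simp
  | tmul a b => simp [mulTensor_tmul, mul_assoc]
  | add s t hs ht => simp only [map_add, hs, ht]

lemma mulTensor_smul {d : ℕ} (n : ℕ) (c : ℂ) (x : ExteriorAlgebra ℂ (Ed d))
    (t : (ExteriorAlgebra ℂ (Ed d)) ⊗[ℂ] (Fin n → ℂ)) :
    mulTensor n (c • x) t = c • mulTensor n x t := by
  induction t with
  | zero => simp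
  | tmul a b => simp [mulTensor_tmul, smul_mul_assoc, TensorProduct.smul_tmul']
  | add s t hs ht => simp only [map_add, hs, ht, smul_add]

lemma mulTensor_add {d : ℕ} (n : ℕ) (x y : ExteriorAlgebra ℂ (Ed d))
    (t : (ExteriorAlgebra ℂ (Ed d)) ⊗[ℂ] (Fin n → ℂ)) :
    mulTensor n (x + y) t = mulTensor n x t + mulTensor n y t := by
  induction t with
  | zero => simp
  | tmul a b => simp [mulTensor_tmul, add_mul, TensorProduct.add_tmul]
  | add s t hs ht =>
      simp only [map_add, hs, ht]
      abel

def Ffun (d : ℕ) : ExteriorAlgebra ℂ (Ed d) →ₗ[ℂ] ℂ :=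
  ExteriorAlgebra.liftAlternating fun i =>
    if h : i = d + 1 then
      AlternatingMap.domDomCongr (finCongr h.symm) (Pi.basisFun ℂ (Fin (d + 1))).det
    else 0

lemma Ffun_iMulti {d : ℕ} (y : Fin (d + 1) → Ed d) :
    Ffun d (ExteriorAlgebra.ιMulti ℂ (d + 1) y) = (Pi.basisFun ℂ (Fin (d + 1))).det y := by
  rw [Ffun, ExteriorAlgebra.liftAlternating_apply_ιMulti, dif_pos rfl]
  simp

lemma Ffun_omega (d : ℕ) : Ffun d (omegaTop d) = 1 := by
  rw [omegaTop, wedgeVecs_eq_iMulti, Ffun_iMulti]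
  have h : (fun i : Fin (d + 1) => (Pi.single i 1 : Ed d)) = ⇑(Pi.basisFun ℂ (Fin (d + 1))) := by
    funext i
    simp
  rw [h, Module.Basis.det_self]

lemma wedgeList_eq_iMulti {d r : ℕ} (Q : List (Ed d)) (h : Q.length = r) :
    wedgeList Q = ExteriorAlgebra.ιMulti ℂ r (fun i => Q.get (Fin.cast h.symm i)) := by
  subst h
  rw [ExteriorAlgebra.ιMulti_apply]
  unfold wedgeList
  congr 1
  conv_lhs => rw [← List.ofFn_get Q]
  rw [List.map_ofFn]
  rfl

lemma Ffun_real {d : ℕ} (Q : List (Ed d)) (h : Q.length = d + 1)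
    (hQ : ∀ x ∈ Q, ∀ l, (starRingEnd ℂ) (x l) = x l) :
    (starRingEnd ℂ) (Ffun d (wedgeList Q)) = Ffun d (wedgeList Q) := by
  rw [wedgeList_eq_iMulti Q h, Ffun_iMulti, Module.Basis.det_apply, RingHom.map_det]
  congr 1
  ext i j
  simp only [RingHom.mapMatrix_apply, Matrix.map_apply, Module.Basis.toMatrix_apply,
    Pi.basisFun_repr]
  exact hQ _ (Q.get_mem _) i

def Phi (d n : ℕ) :
    (ExteriorAlgebra ℂ (Ed d)) ⊗[ℂ] (Fin n → ℂ) →ₗ[ℂ] (Fin n → ℂ) :=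
  (TensorProduct.lid ℂ (Fin n → ℂ)).toLinearMap ∘ₗ TensorProduct.map (Ffun d) LinearMap.id

lemma Phi_tmul (d n : ℕ) (x : ExteriorAlgebra ℂ (Ed d)) (b : Fin n → ℂ) :
    Phi d n (x ⊗ₜ[ℂ] b) = Ffun d x • b := by
  simp [Phi]

lemma herm_dot {n : ℕ} {A : Matrix (Fin n) (Fin n) ℂ} (hA : A.IsHermitian) (w : Fin n → ℂ) :
    (starRingEnd ℂ) (dotProduct (star w) (A.mulVec w))
      = dotProduct (star w) (A.mulVec w) := by
  rw [starRingEnd_apply]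
  conv_lhs => rw [Matrix.star_dotProduct, star_star, Matrix.star_mulVec, hA.eq,
    ← Matrix.dotProduct_mulVec]

lemma dot_sum {n : ℕ} {α : Type*} (S : Finset α) (w : Fin n → ℂ) (f : α → Fin n → ℂ) :
    dotProduct w (∑ a ∈ S, f a) = ∑ a ∈ S, dotProduct w (f a) := by
  simp only [dotProduct, Finset.sum_apply, Finset.mul_sum]
  rw [Finset.sum_comm]
set_option maxHeartbeats 1600000 in
theorem stmt12 (d k n : ℕ) (hd : 1 ≤ d) (hk : k + 1 ≤ d) (hn : 1 ≤ n)
    -- the coordinate matrices `γ_I`, Hermitian for `|I| = k+1`: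
    (γmat : Finset (Fin (d + 1)) → Matrix (Fin n) (Fin n) ℂ)
    (hherm : ∀ I : Finset (Fin (d + 1)), I.card = k + 1 → (γmat I).IsHermitian)
    -- the Livsic-type tensor `γ(w) = Σ_{|I| = k+1} e_I ⊗ (γ_I w)`:
    (γfun : (Fin n → ℂ) → (ExteriorAlgebra ℂ (Ed d)) ⊗[ℂ] (Fin n → ℂ))
    (hγ : ∀ w : Fin n → ℂ, γfun w =
        ∑ I ∈ Finset.univ.filter (fun I : Finset (Fin (d + 1)) => I.card = k + 1),
          eWedge I ⊗ₜ[ℂ] (γmat I).mulVec w)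
    -- `V` is a real subspace of dimension `d−k` …
    (V : Submodule ℂ (Ed d)) (hVreal : ∀ x ∈ V, conjE x ∈ V)
    (hVdim : Module.finrank ℂ V = d - k)
    -- … with a basis `v₀,…,v_{d−k−1}` of vectors with real coordinates …
    (v : Fin (d - k) → Ed d)
    (hvreal : ∀ (j : Fin (d - k)) (i : Fin (d + 1)), (starRingEnd ℂ) (v j i) = v j i)
    (hvspan : Submodule.span ℂ (Set.range v) = V)
    -- … such that `γ(v₀,…,v_{d−k−1})` is a positive definite Hermitian matrix:
    (G : Matrix (Fin n) (Fin n) ℂ)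
    (hGdef : ∀ w : Fin n → ℂ,
        mulTensor n (wedgeVecs v) (γfun w) = omegaTop d ⊗ₜ[ℂ] G.mulVec w)
    (hGpos : G.PosDef) :
    -- then `X = {[μ] : μ ∈ Ď(γ)}` is hyperbolic with respect to `V`:
    (∀ μ : Ed d,
        (μ ≠ 0 ∧ ∃ w : Fin n → ℂ, w ≠ 0 ∧ mulTensor n (ExteriorAlgebra.ι ℂ μ) (γfun w) = 0) →
        μ ∉ V) ∧
      ∀ U : Submodule ℂ (Ed d), V ≤ U →
        Module.finrank ℂ U = (d - k) + 1 →
        (∀ u ∈ U, conjE u ∈ U) →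
        ∀ μ : Ed d,
          (μ ≠ 0 ∧ ∃ w : Fin n → ℂ, w ≠ 0 ∧
              mulTensor n (ExteriorAlgebra.ι ℂ μ) (γfun w) = 0) →
          μ ∈ U → ∃ c : ℂ, conjE μ = c • μ := by
  classical
  -- expansion of `Φ (X · γ(w))`
  have prodExp : ∀ (X : ExteriorAlgebra ℂ (Ed d)) (w : Fin n → ℂ),
      Phi d n (mulTensor n X (γfun w)) =
        ∑ I ∈ Finset.univ.filter (fun I : Finset (Fin (d + 1)) => I.card = k + 1),
          Ffun d (X * eWedge I) • (γmat I).mulVec w := by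
    intro X w
    rw [hγ w, map_sum, map_sum]
    exact Finset.sum_congr rfl fun I _ => by rw [mulTensor_tmul, Phi_tmul]
  -- families containing `μ` in some slot are killed
  have kill : ∀ (w : Fin n → ℂ) (μ : Ed d),
      mulTensor n (ExteriorAlgebra.ι ℂ μ) (γfun w) = 0 →
      ∀ (j : Fin (d - k)) (z : Fin (d - k) → Ed d), z j = μ →
      mulTensor n (wedgeVecs z) (γfun w) = 0 := by
    intro w μ h0 j z hz
    have hlt : (j : ℕ) < (List.ofFn z).length := by simp [j.isLt]
    have hsplit : List.ofFn z
        = (List.ofFn z).take (j : ℕ) ++ μ :: (List.ofFn z).drop ((j : ℕ) + 1) := by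
      conv_lhs => rw [← List.take_append_drop (j : ℕ) (List.ofFn z)]
      congr 1
      rw [List.drop_eq_getElem_cons hlt]
      congr 1
      simpa using hz
    rw [wedgeVecs_eq_wedgeList, hsplit, wedgeList_append, wedgeList_cons,
      iota_mul_wedgeList, mul_smul_comm, ← mul_assoc, mulTensor_smul, mulTensor_mul, h0,
      map_zero, smul_zero]
  -- the core computation
  have core : ∀ (w : Fin n → ℂ), w ≠ 0 → ∀ (μ : Ed d),
      mulTensor n (ExteriorAlgebra.ι ℂ μ) (γfun w) = 0 →
      ∀ (u : Ed d), (∀ l, (starRingEnd ℂ) (u l) = u l) →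
      ∀ (t : ℂ) (c : Fin (d - k) → ℂ), μ = (∑ i, c i • v i) + t • u →
      ∀ j : Fin (d - k), ∃ s : ℂ, (starRingEnd ℂ) s = s ∧ c j = t * s := by
    intro w hw μ h0 u hu t c hdec j
    set L : Ed d →ₗ[ℂ] ExteriorAlgebra ℂ (Ed d) :=
      (ExteriorAlgebra.ιMulti ℂ (d - k) (M := Ed d)).toMultilinearMap.toLinearMap v j with hL
    have hLz : ∀ z, L z = wedgeVecs (Function.update v j z) := by
      intro z
      rw [hL, wedgeVecs_eq_iMulti]
      simp [MultilinearMap.toLinearMap_apply]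
    have hzero : mulTensor n (L μ) (γfun w) = 0 := by
      rw [hLz]
      exact kill w μ h0 j _ (Function.update_self j μ v)
    have hvanish : ∀ i, i ≠ j → L (c i • v i) = 0 := by
      intro i hij
      rw [map_smul, hLz]
      have hz : wedgeVecs (Function.update v j (v i)) = 0 := by
        rw [wedgeVecs_eq_iMulti]
        exact AlternatingMap.map_eq_zero_of_eq _ _
          (show Function.update v j (v i) i = Function.update v j (v i) j by
            rw [Function.update_of_ne hij, Function.update_self]) hij
      rw [hz, smul_zero]
    have hLμ : L μ = c j • wedgeVecs v + t • L u := by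
      rw [hdec, map_add, map_sum, map_smul]
      congr 1
      rw [Finset.sum_eq_single j (fun i _ hij => hvanish i hij) (by simp)]
      rw [map_smul, hLz, Function.update_eq_self, wedgeVecs_eq_iMulti]
    have h2 : (0 : Fin n → ℂ)
        = c j • G.mulVec w + t • Phi d n (mulTensor n (L u) (γfun w)) := by
      calc (0 : Fin n → ℂ) = Phi d n (mulTensor n (L μ) (γfun w)) := by
            rw [hzero, map_zero]
        _ = c j • Phi d n (mulTensor n (wedgeVecs v) (γfun w))
              + t • Phi d n (mulTensor n (L u) (γfun w)) := by
            rw [hLμ, mulTensor_add, mulTensor_smul, mulTensor_smul, map_add, map_smul,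
              map_smul]
        _ = _ := by rw [hGdef w, Phi_tmul, Ffun_omega, one_smul]
    set g := dotProduct (star w) (G.mulVec w) with hgdef
    have hgpos : (0 : ℂ) < g := hGpos.dotProduct_mulVec_pos hw
    have hgne : g ≠ 0 := hgpos.ne'
    have hgreal : (starRingEnd ℂ) g = g := herm_dot hGpos.1 w
    set r := dotProduct (star w) (Phi d n (mulTensor n (L u) (γfun w))) with hrdef
    have hrreal : (starRingEnd ℂ) r = r := by
      rw [hrdef, prodExp, dot_sum, map_sum]
      refine Finset.sum_congr rfl fun I hI => ?_
      have hIc : I.card = k + 1 := (Finset.mem_filter.mp hI).2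
      rw [dotProduct_smul, smul_eq_mul, map_mul]
      congr 1
      · have hQ : L u * eWedge I = wedgeList
            (List.ofFn (Function.update v j u)
              ++ (I.sort (· ≤ ·)).map fun i => (Pi.single i 1 : Ed d)) := by
          rw [hLz, wedgeVecs_eq_wedgeList, eWedge_eq_wedgeList, wedgeList_append]
        rw [hQ]
        apply Ffun_real
        · simp only [List.length_append, List.length_ofFn, List.length_map,
            Finset.length_sort, hIc]
          omega
        · intro x hx l
          rcases List.mem_append.mp hx with hx | hx
          · obtain ⟨i, rfl⟩ := List.mem_ofFn.mp hx
            rcases eq_or_ne i j with rfl | hij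
            · rw [Function.update_self]; exact hu l
            · rw [Function.update_of_ne hij]; exact hvreal i l
          · obtain ⟨i, _, rfl⟩ := List.mem_map.mp hx
            rcases eq_or_ne l i with rfl | hli
            · simp
            · rw [Pi.single_eq_of_ne hli]
              simp
      · exact herm_dot (hherm I hIc) w
    have heq : c j * g + t * r = 0 := by
      have h3 := congrArg (fun x : Fin n → ℂ => dotProduct (star w) x) h2
      simp only [dotProduct_zero, dotProduct_add, dotProduct_smul,
        smul_eq_mul] at h3
      rw [← hgdef, ← hrdef] at h3
      exact h3.symm
    refine ⟨-(r / g), ?_, ?_⟩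
    · rw [map_neg, map_div₀, hrreal, hgreal]
    · field_simp
      linear_combination heq
  -- part 1
  have part1 : ∀ μ : Ed d,
      (μ ≠ 0 ∧ ∃ w : Fin n → ℂ, w ≠ 0 ∧ mulTensor n (ExteriorAlgebra.ι ℂ μ) (γfun w) = 0) →
      μ ∉ V := by
    rintro μ ⟨hμ, w, hw, h0⟩ hμV
    rw [← hvspan] at hμV
    obtain ⟨c, hc⟩ := (Submodule.mem_span_range_iff_exists_fun ℂ).mp hμV
    have hdec : μ = (∑ i, c i • v i) + (0 : ℂ) • (0 : Ed d) := by
      rw [hc, smul_zero, add_zero]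
    have hc0 : ∀ i, c i = 0 := by
      intro i
      obtain ⟨s, _, hs⟩ := core w hw μ h0 0 (by intro l; simp) 0 c hdec i
      simpa using hs
    apply hμ
    rw [← hc]
    exact Finset.sum_eq_zero fun i _ => by rw [hc0 i, zero_smul]
  refine ⟨part1, ?_⟩
  intro U hVU hUdim hUreal μ hXμ hμU
  obtain ⟨hμ, w, hw, h0⟩ := hXμ
  have hVltU : V < U := by
    refine lt_of_le_of_ne hVU fun h => ?_
    rw [← h, hVdim] at hUdim
    omega
  obtain ⟨u0, hu0U, hu0V⟩ := SetLike.exists_of_lt hVltU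
  set a : Ed d := u0 + conjE u0 with ha
  set b : Ed d := Complex.I • u0 - Complex.I • conjE u0 with hb
  have haU : a ∈ U := U.add_mem hu0U (hUreal u0 hu0U)
  have hbU : b ∈ U := U.sub_mem (U.smul_mem _ hu0U) (U.smul_mem _ (hUreal u0 hu0U))
  have hareal : ∀ l, (starRingEnd ℂ) (a l) = a l := by
    intro l
    simp only [ha, Pi.add_apply, conjE, map_add, Complex.conj_conj]
    ring
  have hbreal : ∀ l, (starRingEnd ℂ) (b l) = b l := by
    intro l
    simp only [hb, Pi.sub_apply, Pi.smul_apply, smul_eq_mul, conjE, map_sub, map_mul,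
      Complex.conj_I, Complex.conj_conj]
    ring
  have hnot : ¬(a ∈ V ∧ b ∈ V) := by
    rintro ⟨haV, hbV⟩
    apply hu0V
    have hu0 : u0 = (2⁻¹ : ℂ) • a + (2⁻¹ : ℂ) • ((-Complex.I) • b) := by
      funext l
      simp only [ha, hb, Pi.add_apply, Pi.smul_apply, Pi.sub_apply, smul_eq_mul, conjE]
      linear_combination ((2⁻¹ : ℂ) * u0 l - 2⁻¹ * (starRingEnd ℂ) (u0 l)) * Complex.I_mul_I
    rw [hu0]
    exact V.add_mem (V.smul_mem _ haV) (V.smul_mem _ (V.smul_mem _ hbV))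
  obtain ⟨u, huU, huV, hureal⟩ : ∃ u, u ∈ U ∧ u ∉ V ∧ ∀ l, (starRingEnd ℂ) (u l) = u l := by
    by_cases haV : a ∈ V
    · exact ⟨b, hbU, fun hbV => hnot ⟨haV, hbV⟩, hbreal⟩
    · exact ⟨a, haU, haV, hareal⟩
  have hWU : V ⊔ Submodule.span ℂ {u} = U := by
    have hle : V ⊔ Submodule.span ℂ {u} ≤ U :=
      sup_le hVU ((Submodule.span_singleton_le_iff_mem u U).mpr huU)
    refine Submodule.eq_of_le_of_finrank_le hle ?_
    have hlt : V < V ⊔ Submodule.span ℂ {u} := by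
      refine lt_of_le_of_ne le_sup_left fun h => huV ?_
      have : u ∈ V ⊔ Submodule.span ℂ {u} :=
        Submodule.mem_sup_right (Submodule.mem_span_singleton_self u)
      rwa [← h] at this
    have hrk := Submodule.finrank_lt_finrank_of_lt hlt
    rw [hVdim] at hrk
    omega
  obtain ⟨ν, hν, b', hb', hsum⟩ := Submodule.mem_sup.mp (hWU ▸ hμU)
  obtain ⟨t, rfl⟩ := Submodule.mem_span_singleton.mp hb'
  rw [← hvspan] at hν
  obtain ⟨c, hc⟩ := (Submodule.mem_span_range_iff_exists_fun ℂ).mp hν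
  have hdec : μ = (∑ i, c i • v i) + t • u := by rw [hc, hsum]
  have key := core w hw μ h0 u hureal t c hdec
  choose s hs1 hs2 using key
  have ht : t ≠ 0 := by
    rintro rfl
    apply hμ
    rw [hdec, zero_smul, add_zero]
    exact Finset.sum_eq_zero fun i _ => by rw [hs2 i, zero_mul, zero_smul]
  refine ⟨(starRingEnd ℂ) t / t, ?_⟩
  funext l
  have hμl : μ l = (∑ i, c i * v i l) + t * u l := by
    rw [hdec]
    simp [Finset.sum_apply]
  have lhs : (starRingEnd ℂ) (μ l)
      = (∑ i, ((starRingEnd ℂ) t * s i) * v i l) + (starRingEnd ℂ) t * u l := by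
    rw [hμl, map_add, map_sum, map_mul, hureal l]
    congr 1
    refine Finset.sum_congr rfl fun i _ => ?_
    rw [map_mul, hvreal i l, hs2 i, map_mul, hs1 i]
  have rhs : ((starRingEnd ℂ) t / t) * μ l
      = (∑ i, ((starRingEnd ℂ) t * s i) * v i l) + (starRingEnd ℂ) t * u l := by
    rw [hμl, mul_add, Finset.mul_sum]
    congr 1
    · refine Finset.sum_congr rfl fun i _ => ?_
      rw [hs2 i]
      field_simp
    · field_simp
  show (starRingEnd ℂ) (μ l) = ((starRingEnd ℂ) t / t) * μ l
  rw [lhs]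
  exact rhs.symm
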